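/- Let k be an algebraically closed field of characteristic p > 0, and let d, e₁, e₂, e₃ be positive integers with each eᵢ prime to p, eᵢ ≤ d for all i, and 2d − 2 = (e₁−1)+(e₂−1)+(e₃−1). Suppose (g₁,h₁) and (g₂,h₂) are two pairs of coprime polynomials in k[x] each satisfying: deg gⱼ = d, deg hⱼ ≤ d − e₃, x^{e₁} divides gⱼ, (x−1)^{e₂} divides gⱼ − hⱼ, and gⱼ′hⱼ − gⱼhⱼ′ ≠ 0. Then g₁h₂ = g₂h₁, i.e., the two rational functions g₁/h₁ and g₂/h₂ are equal (the separable degree-d cover of ℙ¹ ramified to order eᵢ at 0, 1, ∞ and fixing 0, 1, ∞ is unique). -/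
import Mathlib


open Polynomial

/-- Uniqueness of the separable degree-`d` cover of `ℙ¹` fixing `0, 1, ∞` and ramified to
order `e₁, e₂, e₃` at `0, 1, ∞` respectively: any two such rational functions `g₁/h₁` and
`g₂/h₂` are equal. -/
theorem three_point_uniqueness {k : Type*} [Field k] [IsAlgClosed k]
    (p : ℕ) (hp : p.Prime) [CharP k p]
    (d e₁ e₂ e₃ : ℕ)
    (hd : 0 < d) (he₁ : 0 < e₁) (he₂ : 0 < e₂) (he₃ : 0 < e₃)
    (hp₁ : ¬ p ∣ e₁) (hp₂ : ¬ p ∣ e₂) (hp₃ : ¬ p ∣ e₃)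
    (hd₁ : e₁ ≤ d) (hd₂ : e₂ ≤ d) (hd₃ : e₃ ≤ d)
    (hsum : 2 * d + 1 = e₁ + e₂ + e₃)
    (g₁ h₁ g₂ h₂ : k[X])
    (hcop₁ : IsCoprime g₁ h₁) (hdeg₁ : g₁.natDegree = d) (hdegh₁ : h₁.natDegree ≤ d - e₃)
    (hx₁ : X ^ e₁ ∣ g₁) (hx1₁ : (X - 1) ^ e₂ ∣ (g₁ - h₁))
    (hsep₁ : derivative g₁ * h₁ - g₁ * derivative h₁ ≠ 0)
    (hcop₂ : IsCoprime g₂ h₂) (hdeg₂ : g₂.natDegree = d) (hdegh₂ : h₂.natDegree ≤ d - e₃)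
    (hx₂ : X ^ e₁ ∣ g₂) (hx1₂ : (X - 1) ^ e₂ ∣ (g₂ - h₂))
    (hsep₂ : derivative g₂ * h₂ - g₂ * derivative h₂ ≠ 0) :
    g₁ * h₂ = g₂ * h₁ := by
  by_contra hne
  have hF0 : g₁ * h₂ - g₂ * h₁ ≠ 0 := sub_ne_zero.mpr hne
  have hdvd1 : (X : k[X]) ^ e₁ ∣ g₁ * h₂ - g₂ * h₁ :=
    dvd_sub (hx₁.mul_right _) (hx₂.mul_right _)
  have hdvd2 : ((X : k[X]) - 1) ^ e₂ ∣ g₁ * h₂ - g₂ * h₁ := by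
    have hrw : g₁ * h₂ - g₂ * h₁ = (g₁ - h₁) * g₂ - g₁ * (g₂ - h₂) := by ring
    rw [hrw]
    exact dvd_sub (hx1₁.mul_right _) (hx1₂.mul_left _)
  have hcopX : IsCoprime ((X : k[X]) ^ e₁) (((X : k[X]) - 1) ^ e₂) := by
    refine IsCoprime.pow ⟨1, -1, by ring⟩
  have hdvd : (X : k[X]) ^ e₁ * ((X : k[X]) - 1) ^ e₂ ∣ g₁ * h₂ - g₂ * h₁ :=
    hcopX.mul_dvd hdvd1 hdvd2
  have hXne : ((X : k[X]) - 1) ≠ 0 := by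
    simpa using X_sub_C_ne_zero (1 : k)
  have hdegprod : ((X : k[X]) ^ e₁ * ((X : k[X]) - 1) ^ e₂).natDegree = e₁ + e₂ := by
    rw [natDegree_mul (pow_ne_zero _ X_ne_zero) (pow_ne_zero _ hXne),
      natDegree_pow, natDegree_pow, natDegree_X]
    have : ((X : k[X]) - 1) = X - C 1 := by simp
    rw [this, natDegree_X_sub_C]
    ring
  have hge : e₁ + e₂ ≤ (g₁ * h₂ - g₂ * h₁).natDegree := by
    rw [← hdegprod]
    exact natDegree_le_of_dvd hdvd hF0
  have hle : (g₁ * h₂ - g₂ * h₁).natDegree ≤ d + (d - e₃) := by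
    refine le_trans (natDegree_sub_le _ _) (max_le ?_ ?_)
    · exact le_trans (natDegree_mul_le) (by omega)
    · exact le_trans (natDegree_mul_le) (by omega)
  omega
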